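/- Let Q be a countable dense suborder of an uncountable linear order B (dense meaning for all x < y in B, [x,y] ∩ Q ≠ ∅). If |B| < 𝔠, then the set of gaps of B has cardinality at least 𝔠. -/

import Mathlib

/-- A gap of a linear order `L`: a pair `(X, Y)` of nonempty sets such that `X` is
exactly the set of lower bounds of `Y`, `Y` is exactly the set of upper bounds of `X`,
and `X ∩ Y = ∅`. -/
def IsGap {L : Type*} [LinearOrder L] (X Y : Set L) : Prop :=
  X.Nonempty ∧ Y.Nonempty ∧ X = {x | ∀ y ∈ Y, x ≤ y} ∧ Y = {y | ∀ x ∈ X, x ≤ y} ∧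
    X ∩ Y = ∅

namespace GapsAux

variable {B : Type*} [LinearOrder B]

/-- The family of cuts (downward closed subsets) of `Q`. -/
def cutFam (Q : Set B) : Set (Set B) :=
  {S | S ⊆ Q ∧ ∀ q ∈ Q, ∀ q' ∈ S, q ≤ q' → q ∈ S}

/-- The downward closure in `B` of a set `S`. -/
def cutX (S : Set B) : Set B := {b | ∃ q ∈ S, b ≤ q}

theorem cutX_dc (S : Set B) {a b : B} (hab : a ≤ b) (hb : b ∈ cutX S) : a ∈ cutX S := by
  obtain ⟨q, hq, hbq⟩ := hb
  exact ⟨q, hq, hab.trans hbq⟩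

theorem mem_of_memQ_memX {Q S : Set B} (hS : S ∈ cutFam Q) {q : B} (hq : q ∈ Q)
    (hx : q ∈ cutX S) : q ∈ S := by
  obtain ⟨q', hq', hqq'⟩ := hx
  exact hS.2 q hq q' hq' hqq'

theorem cutX_inter_Q {Q S : Set B} (hS : S ∈ cutFam Q) : cutX S ∩ Q = S := by
  ext q
  constructor
  · rintro ⟨hx, hq⟩
    exact mem_of_memQ_memX hS hq hx
  · intro hq
    exact ⟨⟨q, hq, le_rfl⟩, hS.1 hq⟩

theorem cut_mem (Q : Set B) (b : B) : {q | q ∈ Q ∧ q ≤ b} ∈ cutFam Q := by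
  refine ⟨fun q hq => hq.1, ?_⟩
  rintro q hq q' ⟨hq'Q, hq'b⟩ hqq'
  exact ⟨hq, hqq'.trans hq'b⟩

theorem greatest_subset {Q S S' : Set B} (hS : S ∈ cutFam Q) (hS' : S' ∈ cutFam Q)
    {b : B} (hg : IsGreatest (cutX S) b) (hg' : IsGreatest (cutX S') b) : S ⊆ S' := by
  intro q hq
  have hq1 : q ∈ cutX S := ⟨q, hq, le_rfl⟩
  have hqb : q ≤ b := hg.2 hq1
  obtain ⟨q'', hq''S', hbq''⟩ := hg'.1
  exact hS'.2 q (hS.1 hq) q'' hq''S' (hqb.trans hbq'')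

theorem least_subset {Q S S' : Set B} (hS : S ∈ cutFam Q) (hS' : S' ∈ cutFam Q)
    {b : B} (hl : IsLeast (cutX S)ᶜ b) (hl' : IsLeast (cutX S')ᶜ b) : S ⊆ S' := by
  intro q hq
  by_contra hq'
  have hqnX : q ∉ cutX S' := fun hx => hq' (mem_of_memQ_memX hS' (hS.1 hq) hx)
  have hbq : b ≤ q := hl'.2 hqnX
  have : b ∈ cutX S := cutX_dc S hbq ⟨q, hq, le_rfl⟩
  exact hl.1 this

theorem isGap_of_cut {Q S : Set B} (hS : S ∈ cutFam Q)
    (hne : S ≠ ∅) (hneQ : S ≠ Q)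
    (hng : ¬ ∃ b, IsGreatest (cutX S) b) (hnl : ¬ ∃ b, IsLeast (cutX S)ᶜ b) :
    IsGap (cutX S) (cutX S)ᶜ := by
  refine ⟨?_, ?_, ?_, ?_, Set.inter_compl_self _⟩
  · obtain ⟨q, hq⟩ := Set.nonempty_iff_ne_empty.mpr hne
    exact ⟨q, q, hq, le_rfl⟩
  · obtain ⟨q, hqQ, hqS⟩ := Set.exists_of_ssubset (hS.1.ssubset_of_ne hneQ)
    exact ⟨q, fun hx => hqS (mem_of_memQ_memX hS hqQ hx)⟩
  · ext x
    constructor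
    · intro hx y hy
      exact le_of_not_gt fun hlt => hy (cutX_dc S hlt.le hx)
    · intro hx
      by_contra hxX
      exact hnl ⟨x, hxX, fun y hy => hx y hy⟩
  · ext y
    constructor
    · intro hy x hx
      exact le_of_not_gt fun hlt => hy (cutX_dc S hlt.le hx)
    · intro hy
      by_contra hyX
      rw [Set.notMem_compl_iff] at hyX
      exact hng ⟨y, hyX, fun a ha => hy a ha⟩

end GapsAux

open GapsAux Cardinal Set in
/-- If `B` is an uncountable linear order of size less than the continuum with a
countable dense suborder `Q`, then `B` has at least continuum many gaps. -/
theorem gaps_of_small_order_with_countable_dense {B : Type*} [LinearOrder B]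
    (hB : ¬ Countable B) (Q : Set B) (hQc : Q.Countable)
    (hQd : ∀ x y : B, x < y → ∃ q ∈ Q, x ≤ q ∧ q ≤ y)
    (hcard : Cardinal.mk B < Cardinal.continuum) :
    Cardinal.continuum ≤ Cardinal.mk {p : Set B × Set B // IsGap p.1 p.2} := by
  classical
  -- Step 1: the family of cuts of `Q` is uncountable
  have hSunc : ¬ Countable ↥(cutFam Q) := by
    intro h
    apply hB
    have hinj : Function.Injective
        (fun b : B => ((⟨{q | q ∈ Q ∧ q ≤ b}, cut_mem Q b⟩ : ↥(cutFam Q)), b ∈ Q)) := by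
      intro b b' hbb'
      have h1 : {q | q ∈ Q ∧ q ≤ b} = {q | q ∈ Q ∧ q ≤ b'} :=
        congrArg Subtype.val (congrArg Prod.fst hbb')
      have h2 : (b ∈ Q) = (b' ∈ Q) := congrArg Prod.snd hbb'
      by_contra hne
      rcases Ne.lt_or_gt hne with hlt | hlt
      · obtain ⟨q, hqQ, hbq, hqb'⟩ := hQd b b' hlt
        have hq' : q ∈ {q | q ∈ Q ∧ q ≤ b} := by rw [h1]; exact ⟨hqQ, hqb'⟩
        have hqb : q = b := le_antisymm hq'.2 hbq
        have hbQ : b ∈ Q := hqb ▸ hqQ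
        have hb'Q : b' ∈ Q := h2 ▸ hbQ
        have : b' ∈ {q | q ∈ Q ∧ q ≤ b} := by rw [h1]; exact ⟨hb'Q, le_rfl⟩
        exact absurd this.2 (not_le.mpr hlt)
      · obtain ⟨q, hqQ, hbq, hqb'⟩ := hQd b' b hlt
        have hq' : q ∈ {q | q ∈ Q ∧ q ≤ b'} := by rw [← h1]; exact ⟨hqQ, hqb'⟩
        have hqb : q = b' := le_antisymm hq'.2 hbq
        have hb'Q : b' ∈ Q := hqb ▸ hqQ
        have hbQ : b ∈ Q := h2 ▸ hb'Q
        have : b ∈ {q | q ∈ Q ∧ q ≤ b'} := by rw [← h1]; exact ⟨hbQ, le_rfl⟩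
        exact absurd this.2 (not_le.mpr hlt)
    exact hinj.countable
  -- Step 2: `Q` is infinite, so we can enumerate it
  haveI := hQc.to_subtype
  haveI hQinf : Infinite ↥Q := by
    by_contra h
    rw [not_infinite_iff_finite] at h
    apply hSunc
    have hinj : Function.Injective (fun S : ↥(cutFam Q) => {q : ↥Q | (q : B) ∈ S.1}) := by
      intro S S' hSS'
      apply Subtype.ext
      ext b
      constructor
      · intro hb
        have hbQ : b ∈ Q := S.2.1 hb
        have h2 : {q : ↥Q | (q : B) ∈ S.1} = {q : ↥Q | (q : B) ∈ S'.1} := hSS'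
        exact (Set.ext_iff.mp h2 ⟨b, hbQ⟩).mp hb
      · intro hb
        have hbQ : b ∈ Q := S'.2.1 hb
        have h2 : {q : ↥Q | (q : B) ∈ S.1} = {q : ↥Q | (q : B) ∈ S'.1} := hSS'
        exact (Set.ext_iff.mp h2 ⟨b, hbQ⟩).mpr hb
    exact hinj.countable
  haveI : Encodable ↥Q := Encodable.ofCountable _
  haveI : Denumerable ↥Q := Denumerable.ofEncodableOfInfinite _
  let e : ℕ ≃ ↥Q := (Denumerable.eqv ↥Q).symm
  -- Step 3: the closed set of cut-indicators in Cantor space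
  let C : Set (ℕ → Bool) :=
    {f | ∀ m n : ℕ, (e m : B) ≤ (e n : B) → f n = true → f m = true}
  have hCclosed : IsClosed C := by
    have hC : C = ⋂ (m : ℕ) (n : ℕ),
        {f : ℕ → Bool | (e m : B) ≤ (e n : B) → f n = true → f m = true} := by
      ext f
      simp only [Set.mem_iInter, Set.mem_setOf_eq]
      rfl
    rw [hC]
    refine isClosed_iInter fun m => isClosed_iInter fun n => ?_
    by_cases hmn : (e m : B) ≤ (e n : B)
    · have : {f : ℕ → Bool | (e m : B) ≤ (e n : B) → f n = true → f m = true}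
          = (fun f : ℕ → Bool => f n) ⁻¹' ({x | x = true})ᶜ ∪
            (fun f : ℕ → Bool => f m) ⁻¹' {x | x = true} := by
        ext f
        simp only [hmn, Set.mem_setOf_eq, Set.mem_union, Set.mem_preimage,
          Set.mem_compl_iff, forall_true_left]
        tauto
      rw [this]
      exact ((isClosed_discrete _).preimage (continuous_apply n)).union
        ((isClosed_discrete _).preimage (continuous_apply m))
    · have : {f : ℕ → Bool | (e m : B) ≤ (e n : B) → f n = true → f m = true} = Set.univ := by
        ext f
        simp [hmn]
      rw [this]
      exact isClosed_univ
  have hCunc : ¬ C.Countable := by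
    intro hC
    apply hSunc
    haveI := hC.to_subtype
    have hmem : ∀ S : ↥(cutFam Q), (fun n => decide ((e n : B) ∈ S.1)) ∈ C := by
      intro S m n hmn h
      rw [decide_eq_true_iff] at h ⊢
      exact S.2.2 _ (e m).2 _ h hmn
    have hinj : Function.Injective
        (fun S : ↥(cutFam Q) => (⟨fun n => decide ((e n : B) ∈ S.1), hmem S⟩ : ↥C)) := by
      intro S S' h
      have hfun : (fun n => decide ((e n : B) ∈ S.1))
          = fun n => decide ((e n : B) ∈ S'.1) := congrArg Subtype.val h
      apply Subtype.ext
      ext b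
      constructor
      · intro hb
        have hbQ : b ∈ Q := S.2.1 hb
        have h1 := congrFun hfun (e.symm ⟨b, hbQ⟩)
        simp only [Equiv.apply_symm_apply] at h1
        rw [decide_eq_decide] at h1
        exact h1.mp hb
      · intro hb
        have hbQ : b ∈ Q := S'.2.1 hb
        have h1 := congrFun hfun (e.symm ⟨b, hbQ⟩)
        simp only [Equiv.apply_symm_apply] at h1
        rw [decide_eq_decide] at h1
        exact h1.mpr hb
    exact hinj.countable
  -- Step 4: a continuum of cuts
  haveI : PolishSpace (ℕ → Bool) := by haveI : PolishSpace Bool := { }; infer_instance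
  obtain ⟨f, hfC, -, hfinj⟩ := hCclosed.exists_nat_bool_injection_of_not_countable hCunc
  have Fmem : ∀ x : ℕ → Bool, {b : B | ∃ n, b = ↑(e n) ∧ f x n = true} ∈ cutFam Q := by
    intro x
    constructor
    · rintro b ⟨n, rfl, -⟩
      exact (e n).2
    · rintro q hqQ q' ⟨n, rfl, hn⟩ hqq'
      have hfx : f x ∈ C := hfC ⟨x, rfl⟩
      refine ⟨e.symm ⟨q, hqQ⟩, ?_, ?_⟩
      · simp
      · refine hfx _ n ?_ hn
        simpa using hqq'
  have hF : Function.Injective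
      (fun x : ℕ → Bool =>
        (⟨{b : B | ∃ n, b = ↑(e n) ∧ f x n = true}, Fmem x⟩ : ↥(cutFam Q))) := by
    intro x x' hxx'
    apply hfinj
    funext n
    have hsets : {b : B | ∃ k, b = ↑(e k) ∧ f x k = true}
        = {b : B | ∃ k, b = ↑(e k) ∧ f x' k = true} := congrArg Subtype.val hxx'
    have key : ∀ g : ℕ → Bool,
        ((e n : B) ∈ {b : B | ∃ k, b = ↑(e k) ∧ g k = true}) ↔ g n = true := by
      intro g
      constructor
      · rintro ⟨k, hk, hgk⟩
        have hkn : e k = e n := Subtype.coe_injective hk.symm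
        rwa [e.injective hkn] at hgk
      · intro h
        exact ⟨n, rfl, h⟩
    have : f x n = true ↔ f x' n = true := by
      rw [← key (f x), hsets, key (f x')]
    rw [Bool.eq_iff_iff]
    exact this
  have h𝔠S : Cardinal.continuum ≤ #↥(cutFam Q) := by
    have h1 := Cardinal.lift_mk_le'.mpr ⟨⟨_, hF⟩⟩
    have h2 : #(ℕ → Bool) = Cardinal.continuum := by
      rw [← Cardinal.power_def Bool ℕ, Cardinal.mk_bool, Cardinal.mk_nat,
        Cardinal.two_power_aleph0]
    rw [h2, Cardinal.lift_continuum, Cardinal.lift_uzero] at h1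
    exact h1
  -- Step 5: remove the bad cuts
  let bad1 : Set (Set B) := {S | S ∈ cutFam Q ∧ ∃ b, IsGreatest (cutX S) b}
  let bad2 : Set (Set B) := {S | S ∈ cutFam Q ∧ ∃ b, IsLeast (cutX S)ᶜ b}
  let R : Set (Set B) := bad1 ∪ bad2 ∪ {∅, Q}
  let good : Set (Set B) := cutFam Q \ R
  have hb1 : #↥bad1 ≤ #B := by
    have hinj : Function.Injective (fun S : ↥bad1 => S.2.2.choose) := by
      intro S S' h
      have hg := S.2.2.choose_spec
      have hg' := S'.2.2.choose_spec
      have h' : S.2.2.choose = S'.2.2.choose := h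
      rw [h'] at hg
      exact Subtype.ext (subset_antisymm
        (greatest_subset S.2.1 S'.2.1 hg hg') (greatest_subset S'.2.1 S.2.1 hg' hg))
    exact Cardinal.mk_le_of_injective hinj
  have hb2 : #↥bad2 ≤ #B := by
    have hinj : Function.Injective (fun S : ↥bad2 => S.2.2.choose) := by
      intro S S' h
      have hg := S.2.2.choose_spec
      have hg' := S'.2.2.choose_spec
      have h' : S.2.2.choose = S'.2.2.choose := h
      rw [h'] at hg
      exact Subtype.ext (subset_antisymm
        (least_subset S.2.1 S'.2.1 hg hg') (least_subset S'.2.1 S.2.1 hg' hg))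
    exact Cardinal.mk_le_of_injective hinj
  have hpair : #↥({∅, Q} : Set (Set B)) ≤ ℵ₀ := by
    haveI : Finite ↥({∅, Q} : Set (Set B)) :=
      ((Set.finite_singleton Q).insert ∅).to_subtype
    exact Cardinal.mk_le_aleph0
  have hRsmall : #↥R < Cardinal.continuum := by
    refine lt_of_le_of_lt
      ((Cardinal.mk_union_le _ _).trans
        (add_le_add_left (Cardinal.mk_union_le _ _) _)) ?_
    refine Cardinal.add_lt_of_lt Cardinal.aleph0_le_continuum
      (Cardinal.add_lt_of_lt Cardinal.aleph0_le_continuum ?_ ?_) ?_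
    · exact lt_of_le_of_lt hb1 hcard
    · exact lt_of_le_of_lt hb2 hcard
    · exact lt_of_le_of_lt hpair Cardinal.aleph0_lt_continuum
  have hcover : cutFam Q ⊆ good ∪ R := by
    intro S hS
    by_cases h : S ∈ R
    · exact Or.inr h
    · exact Or.inl ⟨hS, h⟩
  have hgoodbig : Cardinal.continuum ≤ #↥good := by
    by_contra h
    push_neg at h
    have : #↥(cutFam Q) < Cardinal.continuum :=
      lt_of_le_of_lt
        ((Cardinal.mk_le_mk_of_subset hcover).trans (Cardinal.mk_union_le _ _))
        (Cardinal.add_lt_of_lt Cardinal.aleph0_le_continuum h hRsmall)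
    exact absurd h𝔠S (not_le.mpr this)
  -- Step 6: every good cut gives a gap
  have hgap : ∀ S ∈ good, IsGap (cutX S) (cutX S)ᶜ := by
    intro S hS
    have hS𝒮 : S ∈ cutFam Q := hS.1
    have hnR : S ∉ R := hS.2
    simp only [R, Set.mem_union, Set.mem_insert_iff, Set.mem_singleton_iff] at hnR
    push_neg at hnR
    obtain ⟨⟨hnb1, hnb2⟩, hne, hneQ⟩ := hnR
    refine isGap_of_cut hS𝒮 (Set.nonempty_iff_ne_empty.mp hne) hneQ ?_ ?_
    · intro hex
      exact hnb1 ⟨hS𝒮, hex⟩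
    · intro hex
      exact hnb2 ⟨hS𝒮, hex⟩
  have hginj : Function.Injective
      (fun S : ↥good =>
        (⟨(cutX S.1, (cutX S.1)ᶜ), hgap S.1 S.2⟩ : {p : Set B × Set B // IsGap p.1 p.2})) := by
    intro S S' h
    have hx : cutX S.1 = cutX S'.1 := congrArg (fun p => p.1.1) h
    apply Subtype.ext
    rw [← cutX_inter_Q S.2.1, ← cutX_inter_Q S'.2.1, hx]
  exact le_trans hgoodbig (Cardinal.mk_le_of_injective hginj)
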